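/- Let A ∈ B(E,F) have generalized inverse A⁺ and let T ∈ B(E,F) with ‖T − A‖ < ‖A⁺‖⁻¹. If R(T) ∩ N(A⁺) = {0}, then B := A⁺ (I_F + (T−A)A⁺)⁻¹ is a generalized inverse of T (i.e., T B T = T and B T B = B) with R(B) = R(A⁺) and N(B) = N(A⁺). -/

import Mathlib

theorem stmt_2 {E F : Type*} [NormedAddCommGroup E] [NormedSpace ℝ E] [CompleteSpace E]
    [NormedAddCommGroup F] [NormedSpace ℝ F] [CompleteSpace F]
    (A T : E →L[ℝ] F) (Ap : F →L[ℝ] E)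
    (h1 : A ∘L Ap ∘L A = A) (h2 : Ap ∘L A ∘L Ap = Ap)
    (hT : ‖T - A‖ < ‖Ap‖⁻¹)
    (hR : LinearMap.range (T : E →ₗ[ℝ] F) ⊓ LinearMap.ker (Ap : F →ₗ[ℝ] E) = ⊥) :
    T ∘L (Ap ∘L Ring.inverse ((1 : F →L[ℝ] F) + (T - A) ∘L Ap)) ∘L T = T ∧
    (Ap ∘L Ring.inverse ((1 : F →L[ℝ] F) + (T - A) ∘L Ap)) ∘L T ∘L
      (Ap ∘L Ring.inverse ((1 : F →L[ℝ] F) + (T - A) ∘L Ap)) =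
      Ap ∘L Ring.inverse ((1 : F →L[ℝ] F) + (T - A) ∘L Ap) ∧
    LinearMap.range ((Ap ∘L Ring.inverse ((1 : F →L[ℝ] F) + (T - A) ∘L Ap)) : F →ₗ[ℝ] E) =
      LinearMap.range (Ap : F →ₗ[ℝ] E) ∧
    LinearMap.ker ((Ap ∘L Ring.inverse ((1 : F →L[ℝ] F) + (T - A) ∘L Ap)) : F →ₗ[ℝ] E) =
      LinearMap.ker (Ap : F →ₗ[ℝ] E) := by
  set S : F →L[ℝ] F := (T - A) ∘L Ap with hSdef
  set C : F →L[ℝ] F := (1 : F →L[ℝ] F) + S with hCdef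
  have hAp : ‖Ap‖ ≠ 0 := by
    intro h
    rw [h, inv_zero] at hT
    exact absurd hT (not_lt.2 (norm_nonneg _))
  have hS1 : ‖S‖ < 1 := by
    calc ‖S‖ ≤ ‖T - A‖ * ‖Ap‖ := ContinuousLinearMap.opNorm_comp_le _ _
      _ < ‖Ap‖⁻¹ * ‖Ap‖ :=
        mul_lt_mul_of_pos_right hT (lt_of_le_of_ne (norm_nonneg _) (Ne.symm hAp))
      _ = 1 := inv_mul_cancel₀ hAp
  have hu : IsUnit C := by
    have h := (Units.oneSub (-S) (by simpa using hS1)).isUnit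
    simpa [sub_neg_eq_add, hCdef] using h
  set Ci : F →L[ℝ] F := Ring.inverse C with hCi
  have hCC : ∀ y, C (Ci y) = y := by
    intro y
    have := Ring.mul_inverse_cancel C hu
    calc C (Ci y) = (C * Ci) y := rfl
      _ = y := by rw [this]; rfl
  have hCC' : ∀ y, Ci (C y) = y := by
    intro y
    have := Ring.inverse_mul_cancel C hu
    calc Ci (C y) = (Ci * C) y := rfl
      _ = y := by rw [this]; rfl
  have hCapp : ∀ y, C y = y + (T - A) (Ap y) := by
    intro y; simp [hCdef, hSdef]
  have h2' : ∀ v, Ap (A (Ap v)) = Ap v := by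
    intro v
    have := DFunLike.congr_fun h2 v
    simpa using this
  have K1 : ∀ y, Ap y = 0 → Ci y = y := by
    intro y hy
    have hcy : C y = y := by rw [hCapp, hy]; simp
    calc Ci y = Ci (C y) := by rw [hcy]
      _ = y := hCC' y
  -- key lemma using hR
  have K2 : ∀ x, Ci (T x) = A (Ap (Ci (T x))) := by
    intro x
    set z := Ci (T x) with hz
    have hCz : z + (T - A) (Ap z) = T x := by
      have := hCC (T x); rwa [hCapp] at this
    have hmem : z - A (Ap z) ∈ LinearMap.range (T : E →ₗ[ℝ] F) ⊓ LinearMap.ker (Ap : F →ₗ[ℝ] E) := by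
      constructor
      · refine ⟨x - Ap z, ?_⟩
        have : T x = z + (T (Ap z) - A (Ap z)) := by
          rw [← hCz]; simp
        rw [map_sub, ContinuousLinearMap.coe_coe, this]; abel
      · simp [LinearMap.mem_ker, map_sub, h2']
    rw [hR, Submodule.mem_bot] at hmem
    have := sub_eq_zero.mp hmem
    exact this
  have goal1 : ∀ x, T (Ap (Ci (T x))) = T x := by
    intro x
    set z := Ci (T x) with hz
    have hCz : z + (T - A) (Ap z) = T x := by
      have := hCC (T x); rwa [hCapp] at this
    have hzz : z = A (Ap z) := K2 x
    have hCz' : z + (T (Ap z) - A (Ap z)) = T x := by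
      rw [← hCz]; simp
    have h0 : z - A (Ap z) = 0 := sub_eq_zero.mpr hzz
    calc T (Ap z) = (z + (T (Ap z) - A (Ap z))) - (z - A (Ap z)) := by abel
      _ = T x - 0 := by rw [hCz', h0]
      _ = T x := sub_zero _
  -- second key: Ci (T (Ap z)) = A (Ap z) where z = Ci y
  have goal2 : ∀ y, Ap (Ci (T (Ap (Ci y)))) = Ap (Ci y) := by
    intro y
    set z := Ci y with hz
    have hw : Ap (z - A (Ap z)) = 0 := by simp [map_sub, h2']
    have hTz : T (Ap z) = C z - (z - A (Ap z)) := by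
      rw [hCapp]; simp
    have hCiw : Ci (z - A (Ap z)) = z - A (Ap z) := K1 _ hw
    have : Ci (T (Ap z)) = A (Ap z) := by
      rw [hTz, map_sub, hCiw, hCC' z]
      abel
    rw [this, h2']
  refine ⟨?_, ?_, ?_, ?_⟩
  · ext x
    simpa using goal1 x
  · ext y
    simpa using goal2 y
  · apply le_antisymm
    · rintro _ ⟨y, rfl⟩
      exact ⟨Ci y, rfl⟩
    · rintro _ ⟨y, rfl⟩
      exact ⟨C y, by simp [hCC' y]⟩
  · ext y
    simp only [LinearMap.mem_ker, ContinuousLinearMap.coe_comp',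
      Function.comp_apply, ContinuousLinearMap.coe_coe]
    constructor
    · intro h
      have hcy : C (Ci y) = Ci y := by rw [hCapp, h]; simp
      rw [← hCC y, hcy]
      exact h
    · intro h
      rw [K1 y h, h]
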